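/- Let u* ≠ 0 be the max-margin direction for a linearly separable dataset (vⱼ, yⱼ). For the GNN trained on r-regular graphs (so its effective classifier on a graph with degrees deg(i) is g(X,A) = (1/(1+r²))·(u*·Σᵢxᵢ + r·u*·Σᵢ deg(i)xᵢ)), there exists a graph G on n ≥ 2 nodes whose feature sum v satisfies sign(u*·v) = +1 but g(G) < 0. -/

import Mathlib

open Matrix BigOperators Finset

def starG : SimpleGraph (Fin 3) where
  Adj i j := i ≠ j ∧ (i = 0 ∨ j = 0)
  symm := ⟨fun _ _ ⟨h1, h2⟩ => ⟨h1.symm, h2.symm⟩⟩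
  loopless := ⟨fun _ ⟨h1, _⟩ => h1 rfl⟩

instance : DecidableRel starG.Adj := fun _ _ => instDecidableAnd

lemma starG_deg (i : Fin 3) [inst : Fintype (starG.neighborSet i)] :
    @SimpleGraph.degree _ starG i inst = if i = 0 then 2 else 1 := by
  rw [Subsingleton.elim inst (SimpleGraph.neighborSetFintype starG i)]
  fin_cases i <;> decide

open scoped Classical in
/-- Construction witnessing failure of extrapolation: a graph whose feature sum
is classified `+1` by the teacher `ustar` but on which the trained GNN's output
is negative. -/
theorem extrapolation_failure_construction {d m : ℕ} (r : ℝ) (hr : 0 < r)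
    (v : Fin m → Fin d → ℝ) (y : Fin m → ℝ)
    (hy : ∀ j, y j = 1 ∨ y j = -1)
    (ustar : Fin d → ℝ) (hu0 : ustar ≠ 0)
    (hufeas : ∀ j, y j * (ustar ⬝ᵥ v j) ≥ 1)
    (huopt : ∀ u : Fin d → ℝ, (∀ j, y j * (u ⬝ᵥ v j) ≥ 1) →
      ustar ⬝ᵥ ustar ≤ u ⬝ᵥ u) :
    ∃ (n : ℕ) (x : Fin n → Fin d → ℝ) (G : SimpleGraph (Fin n)),
      2 ≤ n ∧
      Real.sign (ustar ⬝ᵥ ∑ i, x i) = 1 ∧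
      (1 + r ^ 2)⁻¹ *
        (ustar ⬝ᵥ (∑ i, x i) + r * (ustar ⬝ᵥ ∑ i, (G.degree i : ℝ) • x i)) < 0 := by
  have hnn : 0 ≤ ustar ⬝ᵥ ustar :=
    Finset.sum_nonneg fun i _ => mul_self_nonneg _
  have hc : 0 < ustar ⬝ᵥ ustar :=
    lt_of_le_of_ne hnn (Ne.symm ((dotProduct_self_eq_zero).not.mpr hu0))
  set ε : ℝ := r / (2 * (1 + r)) with hε
  have hεpos : 0 < ε := by positivity
  set c : Fin 3 → ℝ := fun i => if i = 0 then -1 else if i = 1 then 1 + ε else 0 with hcdef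
  refine ⟨3, fun i => c i • ustar, starG, by norm_num, ?_, ?_⟩
  · have hsum : (∑ i, c i • ustar) = ε • ustar := by
      simp [Fin.sum_univ_three, hcdef]; module
    beta_reduce
    rw [hsum, dotProduct_smul, smul_eq_mul]
    exact Real.sign_of_pos (by positivity)
  · beta_reduce
    simp only [starG_deg]
    have hdsum : (∑ i : Fin 3, ((if i = 0 then (2:ℕ) else 1 : ℕ) : ℝ) • c i • ustar)
        = (ε - 1) • ustar := by
      simp [Fin.sum_univ_three, hcdef]; module
    have hsum : (∑ i, c i • ustar) = ε • ustar := by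
      simp [Fin.sum_univ_three, hcdef]; module
    rw [hdsum, hsum, dotProduct_smul, dotProduct_smul, smul_eq_mul, smul_eq_mul]
    have key : ε + r * (ε - 1) < 0 := by
      have : ε * (1 + r) = r / 2 := by rw [hε, div_mul_eq_mul_div, div_eq_div_iff (by positivity) (by positivity)]; ring
      nlinarith
    have h1 : 0 < (1 + r ^ 2)⁻¹ := by positivity
    calc (1 + r ^ 2)⁻¹ * (ε * (ustar ⬝ᵥ ustar) + r * ((ε - 1) * (ustar ⬝ᵥ ustar)))
        = (1 + r ^ 2)⁻¹ * ((ε + r * (ε - 1)) * (ustar ⬝ᵥ ustar)) := by ring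
      _ < 0 := by
          apply mul_neg_of_pos_of_neg h1
          exact mul_neg_of_neg_of_pos key hc
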